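/- arXiv:2602.11837 — 4 statements merged into one kernel-verified Lean document; each statement's English description precedes it below -/
import Mathlib

section
/- Let A be an n-by-n self-adjoint complex matrix, f an increasing real function on the spectrum of A, and U an n-by-n unitary matrix. Then Tr(f(A)(A - U A U*)) ≥ 0. -/
open Matrix Set Filter

/-- Functional calculus for a Hermitian matrix: apply `f` to the eigenvalues. -/
noncomputable def hermCalc {m : Type*} [Fintype m] [DecidableEq m]
    (A : Matrix m m ℂ) (f : ℝ → ℝ) : Matrix m m ℂ :=
  if hA : A.IsHermitian then
    (Matrix.IsHermitian.eigenvectorUnitary hA : Matrix m m ℂ) *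
      Matrix.diagonal (fun i => (f (hA.eigenvalues i) : ℂ)) *
      star (Matrix.IsHermitian.eigenvectorUnitary hA : Matrix m m ℂ)
  else 0

open Finset in
lemma tele_key (ν : ℕ → ℝ) (hν : Monotone ν) (f : ℝ → ℝ)
    (hf : ∀ k l : ℕ, k ≤ l → f (ν k) ≤ f (ν l)) (a b : ℕ) :
    (∑ k ∈ range a, f (ν k) * (ν (k+1) - ν k))
      - (∑ k ∈ range b, f (ν k) * (ν (k+1) - ν k))
      ≤ f (ν a) * (ν a - ν b) := by
  have tele : ∀ c d : ℕ, c ≤ d → ∑ k ∈ Finset.Ico c d, (ν (k+1) - ν k) = ν d - ν c := by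
    intro c d hcd
    rw [Finset.sum_Ico_eq_sub _ hcd, Finset.sum_range_sub, Finset.sum_range_sub]
    ring
  rcases le_total b a with hba | hab
  · rw [← Finset.sum_Ico_eq_sub _ hba]
    calc ∑ k ∈ Finset.Ico b a, f (ν k) * (ν (k+1) - ν k)
        ≤ ∑ k ∈ Finset.Ico b a, f (ν a) * (ν (k+1) - ν k) := by
          apply Finset.sum_le_sum
          intro k hk
          have hk' := (Finset.mem_Ico.mp hk).2
          exact mul_le_mul_of_nonneg_right (hf k a hk'.le)
            (sub_nonneg.mpr (hν (Nat.le_succ k)))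
      _ = f (ν a) * (ν a - ν b) := by rw [← Finset.mul_sum, tele _ _ hba]
  · have : f (ν a) * (ν b - ν a) ≤
        ∑ k ∈ Finset.Ico a b, f (ν k) * (ν (k+1) - ν k) := by
      rw [← tele _ _ hab, Finset.mul_sum]
      apply Finset.sum_le_sum
      intro k hk
      exact mul_le_mul_of_nonneg_right (hf a k (Finset.mem_Ico.mp hk).1)
        (sub_nonneg.mpr (hν (Nat.le_succ k)))
    rw [Finset.sum_Ico_eq_sub _ hab] at this
    nlinarith

lemma exists_G {n : Type*} [Fintype n] (lam : n → ℝ) (f : ℝ → ℝ)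
    (hf : ∀ i j : n, lam i ≤ lam j → f (lam i) ≤ f (lam j)) :
    ∃ G : n → ℝ, ∀ i j, G i - G j ≤ f (lam i) * (lam i - lam j) := by
  rcases isEmpty_or_nonempty n with h | h
  · exact ⟨0, fun i => isEmptyElim i⟩
  set m := Fintype.card n with hmdef
  have hm : 0 < m := Fintype.card_pos
  set e := Fintype.equivFin n with hedef
  set μ : Fin m → ℝ := lam ∘ e.symm with hμ
  set σ := Tuple.sort μ with hσ
  have hmono : Monotone (μ ∘ σ) := Tuple.monotone_sort μ
  set ν : ℕ → ℝ := fun k => (μ ∘ σ) ⟨min k (m-1), by omega⟩ with hνdef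
  have hν : Monotone ν := by
    intro k l hkl
    exact hmono (by simp only [Fin.mk_le_mk]; omega)
  have hrange : ∀ k : ℕ, ∃ i : n, ν k = lam i :=
    fun k => ⟨e.symm (σ ⟨min k (m-1), by omega⟩), rfl⟩
  have hfν : ∀ k l : ℕ, k ≤ l → f (ν k) ≤ f (ν l) := by
    intro k l hkl
    obtain ⟨i, hi⟩ := hrange k; obtain ⟨j, hj⟩ := hrange l
    rw [hi, hj]; exact hf i j (hi ▸ hj ▸ hν hkl)
  set t : n → ℕ := fun i => (σ⁻¹ (e i) : ℕ) with htdef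
  have ht : ∀ i, ν (t i) = lam i := by
    intro i
    have h1 : t i < m := (σ⁻¹ (e i)).isLt
    have h2 : (⟨min (t i) (m-1), by omega⟩ : Fin m) = σ⁻¹ (e i) := by
      apply Fin.ext; simp [htdef]; omega
    simp only [hνdef, Function.comp_apply, h2, Equiv.Perm.coe_inv, Equiv.apply_symm_apply, hμ,
      Equiv.symm_apply_apply]
  refine ⟨fun i => ∑ k ∈ Finset.range (t i), f (ν k) * (ν (k+1) - ν k), ?_⟩
  intro i j
  have := tele_key ν hν f hfν (t i) (t j)
  rwa [ht i, ht j] at this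

lemma sum_ineq {n : Type*} [Fintype n] (lam : n → ℝ) (f : ℝ → ℝ)
    (hf : ∀ i j : n, lam i ≤ lam j → f (lam i) ≤ f (lam j))
    (p : n → n → ℝ) (hp : ∀ i j, 0 ≤ p i j)
    (hrow : ∀ i, ∑ j, p i j = 1) (hcol : ∀ j, ∑ i, p i j = 1) :
    ∑ i, ∑ j, p i j * (f (lam i) * lam j) ≤ ∑ i, f (lam i) * lam i := by
  obtain ⟨G, hG⟩ := exists_G lam f hf
  have h0 : ∑ i, ∑ j, p i j * (G i - G j) = 0 := by
    have h1 : ∑ i : n, ∑ j : n, p i j * G i = ∑ i : n, G i := by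
      simp only [← Finset.sum_mul]
      simp only [mul_comm, ← Finset.mul_sum]
      simp [hrow]
    have h2 : ∑ i : n, ∑ j : n, p i j * G j = ∑ j : n, G j := by
      rw [Finset.sum_comm]
      simp only [← Finset.sum_mul]
      simp [hcol]
    simp only [mul_sub, Finset.sum_sub_distrib, h1, h2, sub_self]
  have h3 : 0 ≤ ∑ i, ∑ j, p i j * (f (lam i) * (lam i - lam j)) := by
    rw [← h0]
    apply Finset.sum_le_sum; intro i _
    apply Finset.sum_le_sum; intro j _
    exact mul_le_mul_of_nonneg_left (hG i j) (hp i j)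
  have h4 : ∑ i : n, ∑ j : n, p i j * (f (lam i) * lam i) = ∑ i, f (lam i) * lam i := by
    simp only [← Finset.sum_mul]
    simp only [mul_comm, ← Finset.mul_sum]
    simp [hrow]
  simp only [mul_sub, Finset.sum_sub_distrib] at h3
  linarith [h3, h4]

/-- If `A` is Hermitian, `f` is increasing on the (real) spectrum of `A`, and `U` is
unitary, then `Tr(f(A)(A - U A U*)) ≥ 0`. -/
theorem stmt_0 {n : Type*} [Fintype n] [DecidableEq n]
    (A : Matrix n n ℂ) (hA : A.IsHermitian) (f : ℝ → ℝ)
    (hf : MonotoneOn f (spectrum ℝ A))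
    (U : Matrix n n ℂ) (hU : U ∈ Matrix.unitaryGroup n ℂ) :
    0 ≤ (Matrix.trace (hermCalc A f * (A - U * A * star U))).re := by
  classical
  set lam := hA.eigenvalues with hlam
  set V : Matrix n n ℂ := (hA.eigenvectorUnitary : Matrix n n ℂ) with hVdef
  have hVmem : V ∈ Matrix.unitaryGroup n ℂ := hA.eigenvectorUnitary.2
  have hV1 : V * star V = 1 := Matrix.mem_unitaryGroup_iff.mp hVmem
  have hV2 : star V * V = 1 := Matrix.mem_unitaryGroup_iff'.mp hVmem
  set D : Matrix n n ℂ := Matrix.diagonal (fun i => (lam i : ℂ)) with hDdef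
  set Df : Matrix n n ℂ := Matrix.diagonal (fun i => (f (lam i) : ℂ)) with hDfdef
  have hcalc : hermCalc A f = V * Df * star V := dif_pos hA
  have hspec : A = V * D * star V := hA.spectral_theorem
  set W : Matrix n n ℂ := star V * U * V with hWdef
  have hWmem : W ∈ Matrix.unitaryGroup n ℂ :=
    mul_mem (mul_mem (Unitary.star_mem hVmem) hU) hVmem
  have hW1 : W * star W = 1 := Matrix.mem_unitaryGroup_iff.mp hWmem
  have hW2 : star W * W = 1 := Matrix.mem_unitaryGroup_iff'.mp hWmem
  have t1 : Matrix.trace (V * Df * star V * A) = Matrix.trace (Df * D) := by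
    conv_lhs => rw [hspec]
    rw [show V * Df * star V * (V * D * star V) = V * (Df * ((star V * V) * D)) * star V by
      simp only [Matrix.mul_assoc]]
    rw [hV2, one_mul, Matrix.trace_mul_cycle, ← Matrix.mul_assoc, hV2, one_mul]
  have t2 : Matrix.trace (V * Df * star V * (U * A * star U))
      = Matrix.trace (Df * W * D * star W) := by
    conv_lhs => rw [hspec]
    rw [show V * Df * star V * (U * (V * D * star V) * star U)
        = V * (Df * W * D * (star V * star U)) from by
      simp only [hWdef, Matrix.mul_assoc]]
    rw [Matrix.trace_mul_comm]
    refine congrArg Matrix.trace ?_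
    simp only [hWdef, Matrix.star_mul, star_star, Matrix.mul_assoc]
  have key : Matrix.trace (hermCalc A f * (A - U * A * star U))
      = Matrix.trace (Df * D) - Matrix.trace (Df * W * D * star W) := by
    rw [hcalc, mul_sub, Matrix.trace_sub, t1, t2]
  set p : n → n → ℝ := fun i j => Complex.normSq (W i j) with hpdef
  have hp : ∀ i j, 0 ≤ p i j := fun i j => Complex.normSq_nonneg _
  have hrow : ∀ i, ∑ j, p i j = 1 := by
    intro i
    have h := congrArg (fun M : Matrix n n ℂ => M i i) hW1
    simp only [Matrix.mul_apply, Matrix.one_apply_eq, Matrix.star_apply] at h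
    have h2 : ∑ j, ((p i j : ℝ) : ℂ) = 1 := by
      rw [← h]
      exact Finset.sum_congr rfl fun j _ => (Complex.mul_conj (W i j)).symm
    exact_mod_cast h2
  have hcol : ∀ j, ∑ i, p i j = 1 := by
    intro j
    have h := congrArg (fun M : Matrix n n ℂ => M j j) hW2
    simp only [Matrix.mul_apply, Matrix.one_apply_eq, Matrix.star_apply] at h
    have h2 : ∑ i, ((p i j : ℝ) : ℂ) = 1 := by
      rw [← h]
      refine Finset.sum_congr rfl fun i _ => ?_
      rw [mul_comm]
      exact (Complex.mul_conj (W i j)).symm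
    exact_mod_cast h2
  have tr1 : (Matrix.trace (Df * D)).re = ∑ i, f (lam i) * lam i := by
    rw [hDfdef, hDdef, Matrix.diagonal_mul_diagonal, Matrix.trace_diagonal, Complex.re_sum]
    exact Finset.sum_congr rfl fun i _ => by
      rw [← Complex.ofReal_mul, Complex.ofReal_re]
  have tr2 : (Matrix.trace (Df * W * D * star W)).re
      = ∑ i, ∑ j, p i j * (f (lam i) * lam j) := by
    have hentry : ∀ i j : n, (Df * W * D) i j = (f (lam i) : ℂ) * W i j * (lam j : ℂ) := by
      intro i j
      rw [hDfdef, hDdef, Matrix.mul_diagonal, Matrix.diagonal_mul]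
    have hT : Matrix.trace (Df * W * D * star W)
        = ∑ i, ∑ j, (Df * W * D) i j * (star W) j i := by
      simp [Matrix.trace, Matrix.mul_apply, Matrix.diag]
    rw [hT, Complex.re_sum]
    refine Finset.sum_congr rfl fun i _ => ?_
    rw [Complex.re_sum]
    refine Finset.sum_congr rfl fun j _ => ?_
    rw [hentry, Matrix.star_apply]
    rw [show (f (lam i) : ℂ) * W i j * (lam j : ℂ) * star (W i j)
        = ((p i j * (f (lam i) * lam j) : ℝ) : ℂ) from by
      push_cast
      rw [hpdef]
      rw [show ((Complex.normSq (W i j) : ℝ) : ℂ) = W i j * star (W i j) from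
        (Complex.mul_conj (W i j)).symm]
      ring]
    exact Complex.ofReal_re _
  have hf' : ∀ i j : n, lam i ≤ lam j → f (lam i) ≤ f (lam j) := fun i j h =>
    hf (hA.eigenvalues_mem_spectrum_real i) (hA.eigenvalues_mem_spectrum_real j) h
  have main := sum_ineq lam f hf' p hp hrow hcol
  rw [key, Complex.sub_re, tr1, tr2]
  linarith
end

section
/- Let A be an n-by-n self-adjoint complex matrix, f an increasing real function on the spectrum of A, and U a unitary matrix. If Tr(f(A)(A - U A U*)) = 0, then U commutes with f(A). -/
open Matrix Set Filter

open Finset in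
lemma exists_potential (s : Finset ℝ) (f : ℝ → ℝ)
    (hf : ∀ x ∈ s, ∀ y ∈ s, x ≤ y → f x ≤ f y) :
    ∃ F : ℝ → ℝ, ∀ x ∈ s, ∀ y ∈ s,
      F x - F y ≤ 2 * f x * (x - y) ∧ (F x - F y = 2 * f x * (x - y) → f x = f y) := by
  induction s using Finset.induction_on_max with
  | empty => exact ⟨0, by simp⟩
  | insert a s ha ih =>
    have hfs : ∀ x ∈ s, ∀ y ∈ s, x ≤ y → f x ≤ f y := by
      intro x hx y hy hxy
      exact hf x (mem_insert_of_mem hx) y (mem_insert_of_mem hy) hxy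
    obtain ⟨F', hF'⟩ := ih hfs
    rcases s.eq_empty_or_nonempty with rfl | hs
    · refine ⟨0, ?_⟩
      intro x hx y hy
      simp only [insert_empty_eq, Finset.mem_singleton] at hx hy
      subst hx; subst hy
      constructor
      · simp
      · intro _; rfl
    · set m := s.max' hs with hm
      have hms : m ∈ s := s.max'_mem hs
      have hma : m < a := ha m hms
      have hanotin : a ∉ s := fun h => lt_irrefl a (ha a h)
      refine ⟨Function.update F' a (F' m + (f m + f a) * (a - m)), ?_⟩
      intro x hx y hy
      have hfm_le_fa : f m ≤ f a :=
        hf m (mem_insert_of_mem hms) a (mem_insert_self a s) hma.le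
      rcases mem_insert.mp hx with rfl | hxs
      · rcases mem_insert.mp hy with rfl | hys
        · constructor
          · simp
          · intro _; rfl
        · -- x = x, y ∈ s
          have hya : y ≠ x := fun h => hanotin (h ▸ hys)
          have hym : y ≤ m := s.le_max' y hys
          have hIH := hF' m hms y hys
          have hfy_le_fm : f y ≤ f m := hfs y hys m hms hym
          rw [Function.update_self, Function.update_of_ne hya]
          have key : 2 * f x * (x - y) - (F' m + (f m + f x) * (x - m) - F' y)
              = (f x - f m) * (x + m - 2 * y) + (2 * f m * (m - y) - (F' m - F' y)) := by
            ring
          have h1 : 0 ≤ (f x - f m) * (x + m - 2 * y) := by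
            apply mul_nonneg (by linarith) (by linarith)
          have h2 : 0 ≤ 2 * f m * (m - y) - (F' m - F' y) := by linarith [hIH.1]
          constructor
          · linarith
          · intro heq
            have : (f x - f m) * (x + m - 2 * y) + (2 * f m * (m - y) - (F' m - F' y)) = 0 := by
              linarith
            have hz1 : (f x - f m) * (x + m - 2 * y) = 0 := by linarith
            have hz2 : F' m - F' y = 2 * f m * (m - y) := by linarith
            have hfmy : f m = f y := hIH.2 hz2
            have : x + m - 2 * y > 0 := by linarith
            have : f x = f m := by
              rcases mul_eq_zero.mp hz1 with h | h
              · linarith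
              · linarith
            linarith
      · rcases mem_insert.mp hy with rfl | hys
        · -- x ∈ s, y = y
          have hxa : x ≠ y := fun h => hanotin (h ▸ hxs)
          have hxm : x ≤ m := s.le_max' x hxs
          have hIH := hF' x hxs m hms
          have hfx_le_fm : f x ≤ f m := hfs x hxs m hms hxm
          have hfx_le_fa : f x ≤ f y :=
            hf x (mem_insert_of_mem hxs) y (mem_insert_self y s) (by linarith)
          rw [Function.update_self, Function.update_of_ne hxa]
          have h1 : 0 ≤ (y - m) * (f m + f y - 2 * f x) := by
            apply mul_nonneg (by linarith) (by linarith)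
          have h2 : 0 ≤ 2 * f x * (x - m) - (F' x - F' m) := by linarith [hIH.1]
          constructor
          · linarith
          · intro heq
            have hz1 : (y - m) * (f m + f y - 2 * f x) = 0 := by linarith
            have : f m + f y - 2 * f x = 0 := by
              rcases mul_eq_zero.mp hz1 with h | h
              · linarith
              · linarith
            linarith
        · have hxa : x ≠ a := fun h => hanotin (h ▸ hxs)
          have hya : y ≠ a := fun h => hanotin (h ▸ hys)
          rw [Function.update_of_ne hxa, Function.update_of_ne hya]
          exact hF' x hxs y hys

/-- Equality case: if `Tr(f(A)(A - U A U*)) = 0` then `U` commutes with `f(A)`. -/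
theorem stmt_1 {n : Type*} [Fintype n] [DecidableEq n]
    (A : Matrix n n ℂ) (hA : A.IsHermitian) (f : ℝ → ℝ)
    (hf : MonotoneOn f (spectrum ℝ A))
    (U : Matrix n n ℂ) (hU : U ∈ Matrix.unitaryGroup n ℂ)
    (heq : Matrix.trace (hermCalc A f * (A - U * A * star U)) = 0) :
    U * hermCalc A f = hermCalc A f * U := by
  classical
  set lam : n → ℝ := hA.eigenvalues with hlam
  set V : Matrix n n ℂ := (hA.eigenvectorUnitary : Matrix n n ℂ) with hVdef
  set D : Matrix n n ℂ := Matrix.diagonal (fun i => (lam i : ℂ)) with hDdef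
  set Df : Matrix n n ℂ := Matrix.diagonal (fun i => (f (lam i) : ℂ)) with hDfdef
  have hVmem : V ∈ Matrix.unitaryGroup n ℂ := hA.eigenvectorUnitary.2
  have hV2 : star V * V = 1 := (Unitary.mem_iff.mp hVmem).1
  have hV1 : V * star V = 1 := (Unitary.mem_iff.mp hVmem).2
  have cancel : ∀ X : Matrix n n ℂ, star V * (V * X) = X := by
    intro X; rw [← Matrix.mul_assoc, hV2, Matrix.one_mul]
  have cancel' : ∀ X : Matrix n n ℂ, V * (star V * X) = X := by
    intro X; rw [← Matrix.mul_assoc, hV1, Matrix.one_mul]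
  have hC : hermCalc A f = V * Df * star V := by
    rw [hermCalc, dif_pos hA]
  have hspec : A = V * D * star V := hA.spectral_theorem
  set W : Matrix n n ℂ := star V * U * V with hWdef
  have hWmem : W ∈ Matrix.unitaryGroup n ℂ :=
    mul_mem (mul_mem (Unitary.star_mem hVmem) hU) hVmem
  have hW2 : star W * W = 1 := (Unitary.mem_iff.mp hWmem).1
  have hW1 : W * star W = 1 := (Unitary.mem_iff.mp hWmem).2
  have hUW : U = V * W * star V := by
    rw [hWdef, Matrix.mul_assoc, Matrix.mul_assoc, hV1, Matrix.mul_one, cancel']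
  set B : n → n → ℝ := fun i j => Complex.normSq (W i j) with hBdef
  have hrow : ∀ i, ∑ j, B i j = 1 := by
    intro i
    have h := congrArg (fun M : Matrix n n ℂ => M i i) hW1
    simp only [Matrix.mul_apply, Matrix.one_apply_eq, Matrix.conjTranspose_apply] at h
    have h2 : ∑ j, ((B i j : ℝ) : ℂ) = 1 := by
      rw [← h]
      refine Finset.sum_congr rfl fun j _ => ?_
      rw [hBdef, ← Complex.mul_conj]
      rfl
    exact_mod_cast h2
  have hcol : ∀ j, ∑ i, B i j = 1 := by
    intro j
    have h := congrArg (fun M : Matrix n n ℂ => M j j) hW2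
    simp only [Matrix.mul_apply, Matrix.one_apply_eq, Matrix.conjTranspose_apply] at h
    have h2 : ∑ i, ((B i j : ℝ) : ℂ) = 1 := by
      rw [← h]
      refine Finset.sum_congr rfl fun i _ => ?_
      rw [hBdef, Complex.normSq_eq_conj_mul_self]
      rfl
    exact_mod_cast h2
  -- the trace identity
  have key : hermCalc A f * (A - U * A * star U) = V * (Df * (D - W * D * star W)) * star V := by
    rw [hC, hUW, hspec]
    have hsW : star (V * W * star V) = V * (star W * star V) := by
      simp [Matrix.star_mul, Matrix.mul_assoc]
    rw [hsW]
    simp only [Matrix.mul_sub, Matrix.sub_mul, Matrix.mul_assoc, cancel, cancel']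
  have htrace : Matrix.trace (Df * (D - W * D * star W)) = 0 := by
    rw [← heq, key, Matrix.trace_mul_cycle, ← Matrix.mul_assoc, hV2, Matrix.one_mul]
  have htr2 : (∑ i, (f (lam i) : ℂ) * (lam i)) -
      (∑ i, ∑ j, (B i j : ℂ) * (f (lam i)) * (lam j)) = 0 := by
    rw [← htrace, Matrix.mul_sub, Matrix.trace_sub]
    congr 1
    · rw [hDfdef, hDdef, Matrix.diagonal_mul_diagonal, Matrix.trace_diagonal]
    · rw [Matrix.trace]
      refine Finset.sum_congr rfl fun i _ => ?_
      simp only [Matrix.diag_apply, Matrix.mul_apply, hDfdef, hDdef, Matrix.diagonal_apply,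
        Matrix.star_apply, ite_mul, mul_ite, zero_mul, mul_zero, Finset.sum_ite_eq,
        Finset.sum_ite_eq', Finset.mem_univ, if_true]
      rw [Finset.mul_sum]
      refine Finset.sum_congr rfl fun j _ => ?_
      have hb : ((B i j : ℝ) : ℂ) = W i j * star (W i j) := by
        rw [hBdef, ← Complex.mul_conj]; rfl
      rw [hb]; ring
  have hrowC : ∀ i, ∑ j, ((B i j : ℝ) : ℂ) = 1 := fun i => by exact_mod_cast hrow i
  have hreal : ∑ i, ∑ j, B i j * (f (lam i) * (lam i - lam j)) = 0 := by
    have hC2 : ((∑ i, ∑ j, B i j * (f (lam i) * (lam i - lam j)) : ℝ) : ℂ) = 0 := by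
      push_cast
      have expand : ∀ i : n,
          ∑ j, ((B i j : ℝ) : ℂ) * ((f (lam i) : ℂ) * ((lam i : ℂ) - (lam j : ℂ)))
          = (f (lam i) : ℂ) * (lam i) - ∑ j, ((B i j : ℝ) : ℂ) * (f (lam i)) * (lam j) := by
        intro i
        have e1 : ∀ j : n, ((B i j : ℝ) : ℂ) * ((f (lam i) : ℂ) * ((lam i : ℂ) - (lam j : ℂ)))
            = ((B i j : ℝ) : ℂ) * ((f (lam i) : ℂ) * (lam i : ℂ))
              - ((B i j : ℝ) : ℂ) * (f (lam i)) * (lam j) := fun j => by ring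
        rw [Finset.sum_congr rfl fun j _ => e1 j, Finset.sum_sub_distrib,
          ← Finset.sum_mul, hrowC i, one_mul]
      rw [Finset.sum_congr rfl fun i _ => expand i, Finset.sum_sub_distrib]
      exact htr2
    exact_mod_cast hC2
  -- the potential function
  set sp : Finset ℝ := Finset.image hA.eigenvalues Finset.univ with hspdef
  have hmono : ∀ x ∈ sp, ∀ y ∈ sp, x ≤ y → f x ≤ f y := by
    intro x hx y hy hxy
    obtain ⟨i, _, rfl⟩ := Finset.mem_image.mp hx
    obtain ⟨j, _, rfl⟩ := Finset.mem_image.mp hy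
    exact hf (hA.eigenvalues_mem_spectrum_real i) (hA.eigenvalues_mem_spectrum_real j) hxy
  obtain ⟨F, hF⟩ := exists_potential sp f hmono
  have hlmem : ∀ i, lam i ∈ sp := fun i => Finset.mem_image_of_mem _ (Finset.mem_univ i)
  have hphi : ∑ i, ∑ j, B i j * (2 * f (lam i) * (lam i - lam j) - (F (lam i) - F (lam j))) = 0 := by
    have e1 : ∀ i j : n, B i j * (2 * f (lam i) * (lam i - lam j) - (F (lam i) - F (lam j)))
        = 2 * (B i j * (f (lam i) * (lam i - lam j)))
          - (B i j * F (lam i) - B i j * F (lam j)) := fun i j => by ring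
    have h2 : ∑ i, ∑ j, (B i j * F (lam i) - B i j * F (lam j)) = 0 := by
      rw [Finset.sum_congr rfl fun i (_ : i ∈ Finset.univ) => Finset.sum_sub_distrib _ _,
        Finset.sum_sub_distrib]
      have ha : ∑ i, ∑ j, B i j * F (lam i) = ∑ i : n, F (lam i) := by
        refine Finset.sum_congr rfl fun i _ => ?_
        rw [← Finset.sum_mul, hrow i, one_mul]
      have hb : ∑ i, ∑ j, B i j * F (lam j) = ∑ j : n, F (lam j) := by
        rw [Finset.sum_comm]
        refine Finset.sum_congr rfl fun j _ => ?_
        rw [← Finset.sum_mul, hcol j, one_mul]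
      rw [ha, hb, sub_self]
    calc ∑ i, ∑ j, B i j * (2 * f (lam i) * (lam i - lam j) - (F (lam i) - F (lam j)))
        = ∑ i, ∑ j, (2 * (B i j * (f (lam i) * (lam i - lam j)))
            - (B i j * F (lam i) - B i j * F (lam j))) := by
          exact Finset.sum_congr rfl fun i _ => Finset.sum_congr rfl fun j _ => e1 i j
      _ = (∑ i, ∑ j, 2 * (B i j * (f (lam i) * (lam i - lam j))))
            - ∑ i, ∑ j, (B i j * F (lam i) - B i j * F (lam j)) := by
          rw [Finset.sum_congr rfl fun i (_ : i ∈ Finset.univ) => Finset.sum_sub_distrib _ _,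
            Finset.sum_sub_distrib]
      _ = 0 := by
          rw [h2, sub_zero]
          have : ∑ i, ∑ j, 2 * (B i j * (f (lam i) * (lam i - lam j)))
              = 2 * ∑ i, ∑ j, B i j * (f (lam i) * (lam i - lam j)) := by
            rw [Finset.mul_sum]
            exact Finset.sum_congr rfl fun i _ => (Finset.mul_sum _ _ _).symm
          rw [this, hreal, mul_zero]
  have hnn : ∀ i j : n, 0 ≤ B i j * (2 * f (lam i) * (lam i - lam j) - (F (lam i) - F (lam j))) := by
    intro i j
    refine mul_nonneg (Complex.normSq_nonneg _) ?_
    have := (hF _ (hlmem i) _ (hlmem j)).1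
    linarith
  have hterm : ∀ i j : n, B i j * (2 * f (lam i) * (lam i - lam j) - (F (lam i) - F (lam j))) = 0 := by
    intro i j
    have houter := (Finset.sum_eq_zero_iff_of_nonneg
      (fun i (_ : i ∈ Finset.univ) => Finset.sum_nonneg fun j _ => hnn i j)).mp hphi i
      (Finset.mem_univ i)
    exact (Finset.sum_eq_zero_iff_of_nonneg fun j (_ : j ∈ Finset.univ) => hnn i j).mp houter j
      (Finset.mem_univ j)
  have hWf : ∀ i j : n, W i j * (f (lam j) : ℂ) = (f (lam i) : ℂ) * W i j := by
    intro i j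
    rcases mul_eq_zero.mp (hterm i j) with hb | hp
    · have hw : W i j = 0 := Complex.normSq_eq_zero.mp hb
      rw [hw, zero_mul, mul_zero]
    · have hfe : f (lam i) = f (lam j) := (hF _ (hlmem i) _ (hlmem j)).2 (by linarith)
      rw [hfe, mul_comm]
  have hDfW : W * Df = Df * W := by
    ext i j
    rw [hDfdef, Matrix.mul_diagonal, Matrix.diagonal_mul]
    exact hWf i j
  rw [hC, hUW]
  simp only [Matrix.mul_assoc, cancel]
  have hmid : W * (Df * star V) = Df * (W * star V) := by
    rw [← Matrix.mul_assoc, hDfW, Matrix.mul_assoc]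
  rw [hmid]
end

section
/- Every doubly stochastic n-by-n matrix of the form (|⟨U v_j, v_i⟩|²)_{ij}, where U is unitary and {v_i} is an orthonormal basis, is a convex combination of permutation matrices, and consequently for an increasing function f and eigenvalues λ_1 ≥ ⋯ ≥ λ_n of a Hermitian matrix A, Σ_i f(λ_i)(λ_i − ⟨U A U* v_i, v_i⟩) = Σ_{σ ∈ S_n} c(σ) Σ_j λ_j (f(λ_j) − f(λ_{σ(j)})) for some probability weights c(σ). -/
open Matrix Set Filter

/-- The standard sesquilinear inner product on `Fin N → ℂ` (conjugate-linear in the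
first variable). -/
noncomputable def dotc {N : ℕ} (x y : Fin N → ℂ) : ℂ :=
  ∑ i, (starRingEnd ℂ) (x i) * y i

/-- Birkhoff–von Neumann applied to the doubly stochastic matrix `(|⟨U v_j, v_i⟩|²)`,
and the resulting rewriting of `Σ_i f(λ_i)(λ_i − ⟨U A U* v_i, v_i⟩)`. -/
theorem stmt_2 {N : ℕ} (A U : Matrix (Fin N) (Fin N) ℂ) (hA : A.IsHermitian)
    (hU : U ∈ Matrix.unitaryGroup (Fin N) ℂ)
    (v : Fin N → (Fin N → ℂ)) (lam : Fin N → ℝ)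
    (hortho : ∀ i j, dotc (v i) (v j) = if i = j then 1 else 0)
    (heig : ∀ i, A.mulVec (v i) = (lam i : ℂ) • v i)
    (hsort : ∀ i j : Fin N, i ≤ j → lam j ≤ lam i)
    (f : ℝ → ℝ) (hf : MonotoneOn f (Set.range lam)) :
    ∃ c : Equiv.Perm (Fin N) → ℝ,
      (∀ σ, c σ ∈ Set.Icc (0 : ℝ) 1) ∧ (∑ σ, c σ = 1) ∧
      (∀ i j, ‖dotc (v i) (U.mulVec (v j))‖ ^ 2
          = ∑ σ, c σ * (if i = σ j then 1 else 0)) ∧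
      (∑ i, f (lam i) * (lam i - (dotc (v i) ((U * A * star U).mulVec (v i))).re)
          = ∑ σ, c σ * ∑ j, lam j * (f (lam j) - f (lam (σ j)))) := by
  classical
  set V : Matrix (Fin N) (Fin N) ℂ := Matrix.of fun i j => v j i with hVdef
  have hVsV : star V * V = 1 := by
    ext i j
    have := hortho i j
    simpa [Matrix.mul_apply, Matrix.one_apply, dotc, hVdef, Matrix.star_apply,
      Matrix.conjTranspose_apply] using this
  have hV : V ∈ Matrix.unitaryGroup (Fin N) ℂ := Matrix.mem_unitaryGroup_iff'.2 hVsV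
  have hVVs : V * star V = 1 := Matrix.mem_unitaryGroup_iff.1 hV
  have hdot : ∀ (B : Matrix (Fin N) (Fin N) ℂ) (i j : Fin N),
      dotc (v i) (B.mulVec (v j)) = (star V * B * V) i j := by
    intro B i j
    simp only [dotc, Matrix.mul_apply, Matrix.mulVec, dotProduct, hVdef,
      Matrix.star_apply, Matrix.conjTranspose_apply, Matrix.of_apply,
      Finset.sum_mul, Finset.mul_sum]
    rw [Finset.sum_comm]
    apply Finset.sum_congr rfl; intro k _
    apply Finset.sum_congr rfl; intro l _
    exact (mul_assoc _ _ _).symm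
  set W : Matrix (Fin N) (Fin N) ℂ := star V * U * V with hWdef
  have hWu : W ∈ Matrix.unitaryGroup (Fin N) ℂ :=
    mul_mem (mul_mem (Unitary.star_mem hV) hU) hV
  have hWWs : W * star W = 1 := Matrix.mem_unitaryGroup_iff.1 hWu
  have hWsW : star W * W = 1 := Matrix.mem_unitaryGroup_iff'.1 hWu
  set M : Matrix (Fin N) (Fin N) ℝ := Matrix.of fun i j => Complex.normSq (W i j) with hMdef
  have hMds : M ∈ doublyStochastic ℝ (Fin N) := by
    rw [mem_doublyStochastic_iff_sum]
    refine ⟨fun i j => Complex.normSq_nonneg _, fun i => ?_, fun j => ?_⟩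
    · have h1 : (W * star W) i i = 1 := by rw [hWWs]; simp
      have h2 : ∑ j, (Complex.normSq (W i j) : ℂ) = 1 := by
        rw [← h1]
        simp [Matrix.mul_apply, Matrix.star_apply, Matrix.conjTranspose_apply,
          Complex.mul_conj]
      exact_mod_cast h2
    · have h1 : (star W * W) j j = 1 := by rw [hWsW]; simp
      have h2 : ∑ i, (Complex.normSq (W i j) : ℂ) = 1 := by
        rw [← h1]
        simp only [Matrix.mul_apply, Matrix.star_apply, Matrix.conjTranspose_apply]
        exact Finset.sum_congr rfl fun i _ => Complex.normSq_eq_conj_mul_self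
      exact_mod_cast h2
  obtain ⟨w, hw0, hw1, hw2⟩ := exists_eq_sum_perm_of_mem_doublyStochastic hMds
  have hcsum : (∑ σ : Equiv.Perm (Fin N), w σ⁻¹) = 1 := by
    rw [← hw1]
    exact Fintype.sum_equiv (Equiv.inv (Equiv.Perm (Fin N))) _ _ (fun σ => rfl)
  have hMeq : ∀ i j, M i j = ∑ σ : Equiv.Perm (Fin N), w σ⁻¹ * (if i = σ j then 1 else 0) := by
    intro i j
    have h1 : M i j = ∑ σ : Equiv.Perm (Fin N), w σ * (if σ i = j then 1 else 0) := by
      rw [← hw2]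
      simp [Matrix.sum_apply, Equiv.Perm.permMatrix, PEquiv.toMatrix_apply,
        Equiv.toPEquiv_apply]
    rw [h1]
    rw [show (∑ σ : Equiv.Perm (Fin N), w σ * (if σ i = j then 1 else 0))
        = ∑ σ : Equiv.Perm (Fin N), w σ⁻¹ * (if σ⁻¹ i = j then 1 else 0) from
      (Equiv.sum_comp (Equiv.inv (Equiv.Perm (Fin N)))
        (fun σ => w σ * (if σ i = j then 1 else 0))).symm]
    apply Finset.sum_congr rfl; intro σ _
    congr 1
    exact if_congr ⟨fun h => by rw [← h]; simp, fun h => by rw [h]; simp⟩ rfl rfl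
  refine ⟨fun σ => w σ⁻¹, ?_, hcsum, ?_, ?_⟩
  · intro σ
    refine ⟨hw0 _, ?_⟩
    calc w σ⁻¹ ≤ ∑ τ, w τ := Finset.single_le_sum (fun τ _ => hw0 τ) (Finset.mem_univ _)
    _ = 1 := hw1
  · intro i j
    rw [Complex.sq_norm, hdot U i j, ← hWdef]
    exact hMeq i j
  -- final sum identity
  have hAV : star V * A * V = Matrix.diagonal (fun i => (lam i : ℂ)) := by
    have hAVe : A * V = V * Matrix.diagonal (fun i => (lam i : ℂ)) := by
      ext k i
      have := congrFun (heig i) k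
      simpa [Matrix.mul_apply, Matrix.mulVec, dotProduct, hVdef,
        Matrix.diagonal, Matrix.of_apply, Finset.sum_ite_eq, mul_comm] using this
    calc star V * A * V = star V * (A * V) := by rw [Matrix.mul_assoc]
    _ = star V * (V * Matrix.diagonal (fun i => (lam i : ℂ))) := by rw [hAVe]
    _ = (star V * V) * Matrix.diagonal (fun i => (lam i : ℂ)) := by rw [Matrix.mul_assoc]
    _ = _ := by rw [hVsV, Matrix.one_mul]
  have hq : ∀ i, (dotc (v i) ((U * A * star U).mulVec (v i))).re = ∑ j, lam j * M i j := by
    intro i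
    rw [hdot (U * A * star U) i i]
    have key : star V * (U * A * star U) * V
        = W * Matrix.diagonal (fun i => (lam i : ℂ)) * star W := by
      have hsW : star W = star V * star U * V := by
        rw [hWdef]; simp [Matrix.star_mul, Matrix.mul_assoc]
      rw [hWdef, hsW, ← hAV]
      calc star V * (U * A * star U) * V
          = star V * U * (V * star V) * A * (V * star V) * star U * V := by
            rw [hVVs]; noncomm_ring
      _ = star V * U * V * (star V * A * V) * (star V * star U * V) := by noncomm_ring
    rw [key]
    have hdd : (W * Matrix.diagonal (fun i => (lam i : ℂ)) * star W) i i
        = ∑ j, ((lam j * Complex.normSq (W i j) : ℝ) : ℂ) := by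
      rw [Matrix.mul_apply]
      apply Finset.sum_congr rfl; intro j _
      rw [Matrix.mul_diagonal, Matrix.star_apply]
      calc W i j * ((lam j : ℂ)) * star (W i j)
          = ((lam j : ℂ)) * (W i j * star (W i j)) := by ring
      _ = ((lam j : ℂ)) * ((Complex.normSq (W i j) : ℝ) : ℂ) := by
            rw [show (star (W i j)) = (starRingEnd ℂ) (W i j) from rfl, Complex.mul_conj]
      _ = _ := by push_cast; ring
    rw [hdd, Complex.re_sum]
    apply Finset.sum_congr rfl; intro j _
    simp [hMdef]
  have e2 : ∑ i, ∑ j, f (lam i) * (lam j * M i j)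
      = ∑ σ : Equiv.Perm (Fin N), w σ⁻¹ * ∑ j, lam j * f (lam (σ j)) := by
    rw [Finset.sum_comm]
    calc ∑ j, ∑ i, f (lam i) * (lam j * M i j)
        = ∑ j, ∑ σ : Equiv.Perm (Fin N), w σ⁻¹ * (lam j * f (lam (σ j))) := by
          apply Finset.sum_congr rfl; intro j _
          calc ∑ i, f (lam i) * (lam j * M i j)
              = ∑ i, ∑ σ : Equiv.Perm (Fin N),
                  w σ⁻¹ * (lam j * (f (lam i) * (if i = σ j then 1 else 0))) := by
                apply Finset.sum_congr rfl; intro i _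
                rw [hMeq i j]; simp only [Finset.mul_sum]
                apply Finset.sum_congr rfl; intro σ _; ring
          _ = ∑ σ : Equiv.Perm (Fin N), ∑ i,
                  w σ⁻¹ * (lam j * (f (lam i) * (if i = σ j then 1 else 0))) :=
                Finset.sum_comm
          _ = ∑ σ : Equiv.Perm (Fin N), w σ⁻¹ * (lam j * f (lam (σ j))) := by
                apply Finset.sum_congr rfl; intro σ _
                rw [← Finset.mul_sum]
                congr 1
                rw [← Finset.mul_sum]
                congr 1
                simp [mul_ite, Finset.sum_ite_eq]
    _ = ∑ σ : Equiv.Perm (Fin N), w σ⁻¹ * ∑ j, lam j * f (lam (σ j)) := by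
          rw [Finset.sum_comm]
          exact Finset.sum_congr rfl fun σ _ => by rw [Finset.mul_sum]
  have e1 : ∑ i, f (lam i) * lam i
      = ∑ σ : Equiv.Perm (Fin N), w σ⁻¹ * ∑ j, lam j * f (lam j) := by
    rw [← Finset.sum_mul, hcsum, one_mul]
    exact Finset.sum_congr rfl fun i _ => by ring
  calc ∑ i, f (lam i) * (lam i - (dotc (v i) ((U * A * star U).mulVec (v i))).re)
      = ∑ i, (f (lam i) * lam i - ∑ j, f (lam i) * (lam j * M i j)) := by
        apply Finset.sum_congr rfl; intro i _
        rw [hq i, mul_sub, Finset.mul_sum]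
  _ = ∑ i, f (lam i) * lam i - ∑ i, ∑ j, f (lam i) * (lam j * M i j) :=
        Finset.sum_sub_distrib _ _
  _ = ∑ σ : Equiv.Perm (Fin N), (w σ⁻¹ * ∑ j, lam j * f (lam j)
        - w σ⁻¹ * ∑ j, lam j * f (lam (σ j))) := by
        rw [e1, e2, Finset.sum_sub_distrib]
  _ = ∑ σ : Equiv.Perm (Fin N), w σ⁻¹ * ∑ j, lam j * (f (lam j) - f (lam (σ j))) := by
        apply Finset.sum_congr rfl; intro σ _
        rw [← mul_sub, ← Finset.sum_sub_distrib]
        congr 1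
        exact Finset.sum_congr rfl fun j _ => by ring
end

section
/- Let X : [0,τ] → M_n(ℂ) be a differentiable solution of X'(t) = [φ(X(t)), X(t)] with X(t) ∈ M_n[a,b] for all t, where φ satisfies condition (C0). Then for every m ∈ ℕ the Schatten norm ‖X(t)‖_{2m} is a decreasing function of t on [0,τ]. -/
open Matrix Set Filter

section herm
variable {m : Type*} [Fintype m] [DecidableEq m] {A B : Matrix m m ℂ}

lemma hermCalc_of (hA : A.IsHermitian) (f : ℝ → ℝ) :
    hermCalc A f = (Matrix.IsHermitian.eigenvectorUnitary hA : Matrix m m ℂ) *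
      Matrix.diagonal (fun i => (f (hA.eigenvalues i) : ℂ)) *
      star (Matrix.IsHermitian.eigenvectorUnitary hA : Matrix m m ℂ) := dif_pos hA

lemma star_mul_self_eigU (hA : A.IsHermitian) :
    star (Matrix.IsHermitian.eigenvectorUnitary hA : Matrix m m ℂ) *
      (Matrix.IsHermitian.eigenvectorUnitary hA : Matrix m m ℂ) = 1 :=
  Unitary.coe_star_mul_self (Matrix.IsHermitian.eigenvectorUnitary hA)

lemma mul_star_self_eigU (hA : A.IsHermitian) :
    (Matrix.IsHermitian.eigenvectorUnitary hA : Matrix m m ℂ) *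
      star (Matrix.IsHermitian.eigenvectorUnitary hA : Matrix m m ℂ) = 1 :=
  Unitary.coe_mul_star_self (Matrix.IsHermitian.eigenvectorUnitary hA)

lemma isHermitian_hermCalc (A : Matrix m m ℂ) (f : ℝ → ℝ) : (hermCalc A f).IsHermitian := by
  unfold hermCalc
  split
  · next hA =>
    unfold Matrix.IsHermitian
    have hD : (Matrix.diagonal (fun i => (f (hA.eigenvalues i) : ℂ)))ᴴ =
        Matrix.diagonal (fun i => (f (hA.eigenvalues i) : ℂ)) := by
      have hst : star (fun i => (f (hA.eigenvalues i) : ℂ)) = fun i => (f (hA.eigenvalues i) : ℂ) := by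
        funext i; simp [Complex.conj_ofReal]
      rw [diagonal_conjTranspose, hst]
    simp only [conjTranspose_mul, Matrix.star_eq_conjTranspose, conjTranspose_conjTranspose,
      hD, mul_assoc]
  · exact Matrix.isHermitian_zero

lemma hermCalc_mul_hermCalc (hA : A.IsHermitian) (f g : ℝ → ℝ) :
    hermCalc A f * hermCalc A g = hermCalc A (fun x => f x * g x) := by
  rw [hermCalc_of hA f, hermCalc_of hA g, hermCalc_of hA]
  set U := (Matrix.IsHermitian.eigenvectorUnitary hA : Matrix m m ℂ)
  have h1 : star U * U = 1 := star_mul_self_eigU hA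
  calc U * Matrix.diagonal (fun i => (f (hA.eigenvalues i) : ℂ)) * star U *
        (U * Matrix.diagonal (fun i => (g (hA.eigenvalues i) : ℂ)) * star U)
      = U * (Matrix.diagonal (fun i => (f (hA.eigenvalues i) : ℂ)) * ((star U * U) *
          Matrix.diagonal (fun i => (g (hA.eigenvalues i) : ℂ)))) * star U := by
        simp only [mul_assoc]
    _ = U * Matrix.diagonal (fun i => (f (hA.eigenvalues i) * g (hA.eigenvalues i) : ℂ)) * star U := by
        rw [h1, one_mul, diagonal_mul_diagonal, mul_assoc]
    _ = _ := by push_cast; rfl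

lemma hermCalc_id (hA : A.IsHermitian) : hermCalc A (fun x => x) = A := by
  rw [hermCalc_of hA]
  conv_rhs => rw [hA.spectral_theorem, Unitary.conjStarAlgAut_apply]
  rfl

lemma hermCalc_one (hA : A.IsHermitian) : hermCalc A (fun _ => 1) = 1 := by
  rw [hermCalc_of hA]
  simp [mul_star_self_eigU hA, mul_assoc]

lemma hermCalc_pow (hA : A.IsHermitian) (k : ℕ) : hermCalc A (fun x => x ^ k) = A ^ k := by
  induction k with
  | zero => simpa using hermCalc_one hA
  | succ k ih =>
      calc hermCalc A (fun x => x ^ (k+1))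
          = hermCalc A (fun x => x ^ k * x) := by
            rw [show (fun x : ℝ => x ^ (k+1)) = (fun x : ℝ => x ^ k * x) from
              funext fun x => pow_succ x k]
        _ = hermCalc A (fun x => x ^ k) * hermCalc A (fun x => x) :=
            (hermCalc_mul_hermCalc hA _ _).symm
        _ = A ^ k * A := by rw [ih, hermCalc_id hA]
        _ = A ^ (k+1) := (pow_succ A k).symm

lemma hermCalc_congr (hA : A.IsHermitian) {f g : ℝ → ℝ}
    (h : ∀ i, f (hA.eigenvalues i) = g (hA.eigenvalues i)) : hermCalc A f = hermCalc A g := by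
  rw [hermCalc_of hA, hermCalc_of hA]
  rw [show (fun i => ((f (hA.eigenvalues i)) : ℂ)) = (fun i => ((g (hA.eigenvalues i)) : ℂ)) from
    funext fun i => by rw [h i]]

lemma trace_hermCalc (hA : A.IsHermitian) (f : ℝ → ℝ) :
    Matrix.trace (hermCalc A f) = ((∑ i, f (hA.eigenvalues i) : ℝ) : ℂ) := by
  rw [hermCalc_of hA, Matrix.trace_mul_cycle, star_mul_self_eigU hA, one_mul, trace_diagonal]
  push_cast
  rfl

end herm

section traceform
variable {m : Type*} [Fintype m] [DecidableEq m] {A B : Matrix m m ℂ}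

lemma trace_hermCalc_mul_hermCalc (hA : A.IsHermitian) (hB : B.IsHermitian) (f g : ℝ → ℝ) :
    Matrix.trace (hermCalc A f * hermCalc B g) =
      ((∑ i, ∑ j, Complex.normSq ((star (Matrix.IsHermitian.eigenvectorUnitary hA : Matrix m m ℂ) *
          (Matrix.IsHermitian.eigenvectorUnitary hB : Matrix m m ℂ)) i j) *
        (f (hA.eigenvalues i) * g (hB.eigenvalues j)) : ℝ) : ℂ) := by
  set U := (Matrix.IsHermitian.eigenvectorUnitary hA : Matrix m m ℂ) with hUdef
  set V := (Matrix.IsHermitian.eigenvectorUnitary hB : Matrix m m ℂ) with hVdef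
  set W := star U * V with hWdef
  set Df := Matrix.diagonal (fun i => (f (hA.eigenvalues i) : ℂ)) with hDf
  set Dg := Matrix.diagonal (fun i => (g (hB.eigenvalues i) : ℂ)) with hDg
  have hsW : star W = star V * U := by rw [hWdef, Matrix.star_mul, star_star]
  have key : hermCalc A f * hermCalc B g = U * (Df * (W * (Dg * star W))) * star U := by
    rw [hermCalc_of hA, hermCalc_of hB, hsW, hWdef]
    simp only [mul_assoc, mul_star_self_eigU hA, mul_one]
    simp only [hUdef, hVdef, hDf, hDg, mul_star_self_eigU hA, mul_one]
  rw [key, Matrix.trace_mul_cycle, ← mul_assoc, star_mul_self_eigU hA, one_mul]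
  have expand : Matrix.trace (Df * (W * (Dg * star W))) =
      ∑ i, ∑ j, (f (hA.eigenvalues i) : ℂ) * (W i j * ((g (hB.eigenvalues j) : ℂ) *
        star (W i j))) := by
    rw [Matrix.trace]
    simp only [Matrix.diag_apply, hDf, hDg, Matrix.mul_apply,
      Matrix.conjTranspose_apply, Matrix.star_eq_conjTranspose, Matrix.diagonal_apply,
      ite_mul, zero_mul, mul_ite, mul_zero, Finset.sum_ite_eq, Finset.sum_ite_eq',
      Finset.mem_univ, if_true, Finset.mul_sum]
    refine Finset.sum_congr rfl fun x _ => ?_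
    rw [Finset.sum_comm]
    simp
  rw [expand]
  push_cast
  congr 1; funext i; congr 1; funext j
  have hc : W i j * star (W i j) = ((Complex.normSq (W i j) : ℝ) : ℂ) := Complex.mul_conj _
  linear_combination ((f (hA.eigenvalues i) : ℂ) * (g (hB.eigenvalues j) : ℂ)) * hc

lemma overlap_mem_doublyStochastic (hA : A.IsHermitian) (hB : B.IsHermitian) :
    Matrix.of (fun i j => Complex.normSq
      ((star (Matrix.IsHermitian.eigenvectorUnitary hA : Matrix m m ℂ) *
        (Matrix.IsHermitian.eigenvectorUnitary hB : Matrix m m ℂ)) i j)) ∈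
      doublyStochastic ℝ m := by
  set U := (Matrix.IsHermitian.eigenvectorUnitary hA : Matrix m m ℂ)
  set V := (Matrix.IsHermitian.eigenvectorUnitary hB : Matrix m m ℂ)
  set W := star U * V with hWdef
  have hsW : star W = star V * U := by rw [hWdef, Matrix.star_mul, star_star]
  have h1 : W * star W = 1 := by
    rw [hsW, hWdef]
    calc star U * V * (star V * U) = star U * (V * star V) * U := by simp only [mul_assoc]
      _ = 1 := by rw [mul_star_self_eigU hB, mul_one, star_mul_self_eigU hA]
  have h2 : star W * W = 1 := by
    rw [hsW, hWdef]
    calc star V * U * (star U * V) = star V * (U * star U) * V := by simp only [mul_assoc]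
      _ = 1 := by rw [mul_star_self_eigU hA, mul_one, star_mul_self_eigU hB]
  rw [mem_doublyStochastic_iff_sum]
  refine ⟨fun i j => Complex.normSq_nonneg _, fun i => ?_, fun j => ?_⟩
  · have h3 := congrArg (fun M => M i i) h1
    simp only [Matrix.mul_apply, Matrix.one_apply_eq, Matrix.conjTranspose_apply,
      Matrix.star_eq_conjTranspose] at h3
    have h4 : ((∑ j, Complex.normSq (W i j) : ℝ) : ℂ) = ((1 : ℝ) : ℂ) := by
      push_cast
      rw [← h3]
      congr 1; funext j
      exact (Complex.mul_conj _).symm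
    simpa using Complex.ofReal_injective h4
  · have h3 := congrArg (fun M => M j j) h2
    simp only [Matrix.mul_apply, Matrix.one_apply_eq, Matrix.conjTranspose_apply,
      Matrix.star_eq_conjTranspose] at h3
    have h4 : ((∑ i, Complex.normSq (W i j) : ℝ) : ℂ) = ((1 : ℝ) : ℂ) := by
      push_cast
      rw [← h3]
      congr 1; funext i
      rw [mul_comm]
      exact (Complex.mul_conj _).symm
    simpa using Complex.ofReal_injective h4

end traceform

section charp
open Polynomial
variable {m : Type*} [Fintype m] [DecidableEq m]

lemma charpoly_conj_aux {R : Type*} [CommRing R] (U M V : Matrix m m R) (hUV : U * V = 1) :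
    (U * M * V).charpoly = M.charpoly := by
  have hmap : ∀ P Q : Matrix m m R, (P * Q).map (Polynomial.C (R := R)) =
      P.map Polynomial.C * Q.map Polynomial.C := fun P Q => by
    ext i j
    simp [Matrix.mul_apply, Matrix.map_apply]
  have hcomm : ∀ P : Matrix m m R[X], Matrix.scalar m (X : R[X]) * P = P * Matrix.scalar m X := by
    intro P
    exact Matrix.scalar_commute (X : R[X]) (fun r => Commute.all _ _) P
  have h1 : charmatrix (U * M * V) = U.map Polynomial.C * charmatrix M * V.map Polynomial.C := by
    unfold charmatrix
    simp only [RingHom.mapMatrix_apply]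
    rw [mul_sub, sub_mul]
    congr 1
    · rw [mul_assoc, hcomm (V.map Polynomial.C), ← mul_assoc, ← hmap, hUV]
      simp
    · rw [hmap, hmap]
  unfold Matrix.charpoly
  rw [h1, Matrix.det_mul, Matrix.det_mul]
  have : (U.map (Polynomial.C (R := R))).det * (V.map Polynomial.C).det = 1 := by
    rw [← Matrix.det_mul, ← hmap, hUV]
    simp
  calc (U.map Polynomial.C).det * (charmatrix M).det * (V.map Polynomial.C).det
      = (charmatrix M).det * ((U.map Polynomial.C).det * (V.map Polynomial.C).det) := by ring
    _ = (charmatrix M).det := by rw [this, mul_one]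

lemma charpoly_diagonal' {R : Type*} [CommRing R] (d : m → R) :
    (Matrix.diagonal d).charpoly = ∏ i, (X - C (d i)) := by
  unfold Matrix.charpoly
  have h1 : charmatrix (Matrix.diagonal d) = Matrix.diagonal (fun i => (X : R[X]) - C (d i)) := by
    unfold charmatrix
    simp only [RingHom.mapMatrix_apply]
    rw [show (Matrix.scalar m (X : R[X])) = Matrix.diagonal (fun _ => (X : R[X])) from rfl]
    rw [Matrix.diagonal_map (by simp), Matrix.diagonal_sub]
  rw [h1, Matrix.det_diagonal]

lemma charpoly_zero' : (0 : Matrix m m ℂ).charpoly = X ^ (Fintype.card m) := by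
  rw [show (0 : Matrix m m ℂ) = Matrix.diagonal (fun _ => 0) from by simp, charpoly_diagonal']
  simp [Finset.card_univ]

lemma charpoly_mul_comm' (M N : Matrix m m ℂ) : (M * N).charpoly = (N * M).charpoly := by
  classical
  set S : Matrix (m ⊕ m) (m ⊕ m) ℂ := Matrix.fromBlocks 1 M 0 1 with hS
  set T : Matrix (m ⊕ m) (m ⊕ m) ℂ := Matrix.fromBlocks 1 (-M) 0 1 with hT
  have hTS : T * S = 1 := by
    rw [hT, hS, Matrix.fromBlocks_multiply]
    simp [Matrix.fromBlocks_one]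
  have hST : S * T = 1 := by
    rw [hT, hS, Matrix.fromBlocks_multiply]
    simp [Matrix.fromBlocks_one]
  set G : Matrix (m ⊕ m) (m ⊕ m) ℂ := Matrix.fromBlocks (M * N) 0 N 0 with hG
  have hconj : (T * G * S).charpoly = G.charpoly := charpoly_conj_aux T G S hTS
  have hTGS : T * G * S = Matrix.fromBlocks 0 0 N (N * M) := by
    rw [hT, hG, hS, Matrix.fromBlocks_multiply, Matrix.fromBlocks_multiply]
    congr 1 <;> simp
  rw [hTGS] at hconj
  have e1 : G.charpoly = (M * N).charpoly * X ^ (Fintype.card m) := by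
    rw [hG, Matrix.charpoly_fromBlocks_zero₁₂, charpoly_zero']
  have e2 : (Matrix.fromBlocks (0 : Matrix m m ℂ) 0 N (N * M)).charpoly =
      X ^ (Fintype.card m) * (N * M).charpoly := by
    rw [Matrix.charpoly_fromBlocks_zero₁₂, charpoly_zero']
  rw [e1, e2] at hconj
  have hx : (X : ℂ[X]) ^ (Fintype.card m) ≠ 0 := pow_ne_zero _ Polynomial.X_ne_zero
  have : (M * N).charpoly * X ^ (Fintype.card m) = (N * M).charpoly * X ^ (Fintype.card m) := by
    rw [← hconj]; ring
  exact mul_right_cancel₀ hx this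

lemma charpoly_isHermitian {A : Matrix m m ℂ} (hA : A.IsHermitian) :
    A.charpoly = ∏ i, (X - C ((hA.eigenvalues i : ℂ))) := by
  conv_lhs => rw [hA.spectral_theorem, Unitary.conjStarAlgAut_apply]
  rw [charpoly_conj_aux _ _ _ (mul_star_self_eigU hA), charpoly_diagonal']
  rfl

lemma multiset_eq_of_prod_eq (a b : m → ℝ)
    (h : (∏ i, (X - C ((a i : ℂ)))) = ∏ i, (X - C ((b i : ℂ)))) :
    Finset.univ.val.map a = Finset.univ.val.map b := by
  have key : ∀ c : m → ℝ, (∏ i, ((X : ℂ[X]) - C ((c i : ℂ)))) =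
      ((Finset.univ.val.map (fun i => ((c i : ℂ)))).map (fun r => X - C r)).prod := by
    intro c
    rw [Multiset.map_map]
    rfl
  rw [key a, key b] at h
  have h2 := congrArg Polynomial.roots h
  rw [Polynomial.roots_multiset_prod_X_sub_C, Polynomial.roots_multiset_prod_X_sub_C] at h2
  have h3 : Finset.univ.val.map (fun i => ((a i : ℂ))) =
      Finset.univ.val.map (fun i => ((b i : ℂ))) := h2
  have h4 : (Finset.univ.val.map a).map (fun x : ℝ => (x : ℂ)) =
      (Finset.univ.val.map b).map (fun x : ℝ => (x : ℂ)) := by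
    rw [Multiset.map_map, Multiset.map_map]
    exact h3
  exact Multiset.map_injective Complex.ofReal_injective h4

end charp

noncomputable def matAbs {m : Type*} [Fintype m] [DecidableEq m]
    (A : Matrix m m ℂ) : Matrix m m ℂ :=
  hermCalc (Aᴴ * A) Real.sqrt

section mabs
open Polynomial
open scoped ComplexOrder
variable {m : Type*} [Fintype m] [DecidableEq m]

lemma matAbs_isHermitian (X : Matrix m m ℂ) : (matAbs X).IsHermitian :=
  isHermitian_hermCalc _ _

lemma matAbs_mul_self (X : Matrix m m ℂ) : matAbs X * matAbs X = Xᴴ * X := by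
  unfold matAbs
  have hC : (Xᴴ * X).IsHermitian := Matrix.isHermitian_conjTranspose_mul_self X
  rw [hermCalc_mul_hermCalc hC]
  rw [hermCalc_congr hC (g := fun x => x) (fun i => Real.mul_self_sqrt
    ((Matrix.posSemidef_conjTranspose_mul_self X).eigenvalues_nonneg i))]
  exact hermCalc_id hC

lemma matAbs_pow_two_mul (X : Matrix m m ℂ) (k : ℕ) :
    (matAbs X) ^ (2 * k) = (Xᴴ * X) ^ k := by
  rw [pow_mul, sq, matAbs_mul_self]

lemma multiset_matAbs_eq (X : Matrix m m ℂ) :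
    Finset.univ.val.map (matAbs_isHermitian X).eigenvalues =
      Finset.univ.val.map (fun i =>
        Real.sqrt ((Matrix.isHermitian_conjTranspose_mul_self X).eigenvalues i)) := by
  have hC : (Xᴴ * X).IsHermitian := Matrix.isHermitian_conjTranspose_mul_self X
  have h1 : (matAbs X).charpoly =
      ∏ i, (Polynomial.X - C (((matAbs_isHermitian X).eigenvalues i : ℂ))) :=
    charpoly_isHermitian _
  have h2 : (matAbs X).charpoly = ∏ i, (Polynomial.X - C ((Real.sqrt (hC.eigenvalues i) : ℂ))) := by
    have : matAbs X = hermCalc (Xᴴ * X) Real.sqrt := rfl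
    rw [this, hermCalc_of hC, charpoly_conj_aux _ _ _ (mul_star_self_eigU hC),
      charpoly_diagonal']
  exact multiset_eq_of_prod_eq _ _ (h1.symm.trans h2)

lemma multiset_matAbs_conjTranspose_eq (X : Matrix m m ℂ) :
    Finset.univ.val.map (matAbs_isHermitian X).eigenvalues =
      Finset.univ.val.map (matAbs_isHermitian Xᴴ).eigenvalues := by
  have hC : (Xᴴ * X).IsHermitian := Matrix.isHermitian_conjTranspose_mul_self X
  have hC' : ((Xᴴ)ᴴ * Xᴴ).IsHermitian := Matrix.isHermitian_conjTranspose_mul_self Xᴴ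
  have hd : Finset.univ.val.map hC.eigenvalues = Finset.univ.val.map hC'.eigenvalues := by
    apply multiset_eq_of_prod_eq
    rw [← charpoly_isHermitian hC, ← charpoly_isHermitian hC']
    have h5 : (Xᴴ)ᴴ * Xᴴ = X * Xᴴ := by rw [conjTranspose_conjTranspose]
    calc (Xᴴ * X).charpoly = (X * Xᴴ).charpoly := charpoly_mul_comm' Xᴴ X
      _ = ((Xᴴ)ᴴ * Xᴴ).charpoly := by rw [h5]
  rw [multiset_matAbs_eq X, multiset_matAbs_eq Xᴴ]
  have := congrArg (Multiset.map Real.sqrt) hd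
  rw [Multiset.map_map, Multiset.map_map] at this
  exact this

end mabs

section rearr
variable {n : Type*} [Fintype n] [DecidableEq n] {a b : ℝ}

lemma exists_perm_of_multiset_map_eq (lam mu : n → ℝ)
    (h : Finset.univ.val.map lam = Finset.univ.val.map mu) :
    ∃ e : Equiv.Perm n, ∀ i, mu (e i) = lam i := by
  classical
  have hcard : ∀ c : ℝ, Fintype.card {i // lam i = c} = Fintype.card {i // mu i = c} := by
    intro c
    have h1 : ∀ ν : n → ℝ, Fintype.card {i // ν i = c} =
        Multiset.count c (Finset.univ.val.map ν) := by
      intro ν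
      rw [Multiset.count_map, Fintype.card_subtype, Finset.card]
      rw [Finset.filter_val]
      congr 1
      exact Multiset.filter_congr (fun x _ => eq_comm)
    rw [h1 lam, h1 mu, h]
  have e : ∀ c : ℝ, {i // lam i = c} ≃ {i // mu i = c} :=
    fun c => Fintype.equivOfCardEq (hcard c)
  exact ⟨Equiv.ofFiberEquiv e, fun i => Equiv.ofFiberEquiv_map e i⟩

lemma perm_matrix_apply (σ : Equiv.Perm n) (i j : n) :
    (σ.permMatrix ℝ) i j = if σ i = j then 1 else 0 := by
  simp [Equiv.Perm.permMatrix, PEquiv.toMatrix_apply, Equiv.toPEquiv_apply]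

lemma rearrangement_bound (f g : ℝ → ℝ) (hf : MonotoneOn f (Set.Icc a b))
    (hg : MonotoneOn g (Set.Icc a b)) (lam mu : n → ℝ)
    (hmult : Finset.univ.val.map lam = Finset.univ.val.map mu)
    (hlam : ∀ i, lam i ∈ Set.Icc a b)
    (w : Matrix n n ℝ) (hw : w ∈ doublyStochastic ℝ n) :
    ∑ i, ∑ j, w i j * (f (lam i) * g (mu j)) ≤ ∑ i, f (lam i) * g (lam i) := by
  classical
  obtain ⟨e, he⟩ := exists_perm_of_multiset_map_eq lam mu hmult
  have hmono : Monovary (fun i => f (lam i)) (fun i => g (lam i)) := by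
    intro i j hgij
    rcases le_total (lam i) (lam j) with h | h
    · exact hf (hlam i) (hlam j) h
    · exact absurd hgij (not_lt.2 (hg (hlam j) (hlam i) h))
  have perm_bound : ∀ σ : Equiv.Perm n,
      ∑ i, f (lam i) * g (mu (σ i)) ≤ ∑ i, f (lam i) * g (lam i) := by
    intro σ
    have h1 : ∀ i, g (mu (σ i)) = g (lam ((σ.trans e.symm) i)) := fun i => by
      rw [Equiv.trans_apply, ← he (e.symm (σ i)), Equiv.apply_symm_apply]
    calc ∑ i, f (lam i) * g (mu (σ i)) = ∑ i, f (lam i) • g (lam ((σ.trans e.symm) i)) := by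
          refine Finset.sum_congr rfl fun i _ => ?_
          rw [h1 i, smul_eq_mul]
      _ ≤ ∑ i, (fun i => f (lam i)) i • (fun i => g (lam i)) i :=
          hmono.sum_smul_comp_perm_le_sum_smul
      _ = ∑ i, f (lam i) * g (lam i) := by simp [smul_eq_mul]
  obtain ⟨c, hc0, hc1, hcsum⟩ := exists_eq_sum_perm_of_mem_doublyStochastic hw
  have hwij : ∀ i j, w i j = ∑ σ : Equiv.Perm n, c σ * (σ.permMatrix ℝ) i j := by
    intro i j
    rw [← hcsum, Matrix.sum_apply]
    refine Finset.sum_congr rfl fun σ _ => ?_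
    rw [Matrix.smul_apply, smul_eq_mul]
  have inner : ∀ i, ∑ j, w i j * (f (lam i) * g (mu j)) =
      ∑ σ : Equiv.Perm n, c σ * (f (lam i) * g (mu (σ i))) := by
    intro i
    calc ∑ j, w i j * (f (lam i) * g (mu j))
        = ∑ j, ∑ σ : Equiv.Perm n, (c σ * (σ.permMatrix ℝ) i j) * (f (lam i) * g (mu j)) := by
          refine Finset.sum_congr rfl fun j _ => ?_
          rw [hwij i j, Finset.sum_mul]
      _ = ∑ σ : Equiv.Perm n, ∑ j, (c σ * (σ.permMatrix ℝ) i j) * (f (lam i) * g (mu j)) :=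
          Finset.sum_comm
      _ = ∑ σ : Equiv.Perm n, c σ * (f (lam i) * g (mu (σ i))) := by
          refine Finset.sum_congr rfl fun σ _ => ?_
          rw [Finset.sum_congr rfl (fun j _ => by rw [perm_matrix_apply σ i j])]
          simp [mul_ite, ite_mul, mul_one, mul_zero, zero_mul, Finset.sum_ite_eq]
  calc ∑ i, ∑ j, w i j * (f (lam i) * g (mu j))
      = ∑ i, ∑ σ : Equiv.Perm n, c σ * (f (lam i) * g (mu (σ i))) :=
        Finset.sum_congr rfl fun i _ => inner i
    _ = ∑ σ : Equiv.Perm n, ∑ i, c σ * (f (lam i) * g (mu (σ i))) := Finset.sum_comm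
    _ = ∑ σ : Equiv.Perm n, c σ * ∑ i, f (lam i) * g (mu (σ i)) := by
        refine Finset.sum_congr rfl fun σ _ => ?_
        rw [Finset.mul_sum]
    _ ≤ ∑ σ : Equiv.Perm n, c σ * ∑ i, f (lam i) * g (lam i) :=
        Finset.sum_le_sum fun σ _ => mul_le_mul_of_nonneg_left (perm_bound σ) (hc0 σ)
    _ = ∑ i, f (lam i) * g (lam i) := by
        rw [← Finset.sum_mul, hc1, one_mul]

end rearr

section keyineq
variable {n : Type*} [Fintype n] [DecidableEq n] {a b : ℝ}

lemma eig_matAbs_mem (X : Matrix n n ℂ) (hspec : spectrum ℝ (matAbs X) ⊆ Set.Icc a b) (i : n) :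
    (matAbs_isHermitian X).eigenvalues i ∈ Set.Icc a b :=
  hspec ((matAbs_isHermitian X).eigenvalues_mem_spectrum_real i)

lemma eig_matAbs_conjT_mem (X : Matrix n n ℂ)
    (hspec : spectrum ℝ (matAbs X) ⊆ Set.Icc a b) (j : n) :
    (matAbs_isHermitian Xᴴ).eigenvalues j ∈ Set.Icc a b := by
  have h1 : (matAbs_isHermitian Xᴴ).eigenvalues j ∈
      Finset.univ.val.map (matAbs_isHermitian Xᴴ).eigenvalues :=
    Multiset.mem_map_of_mem _ (Finset.mem_univ_val j)
  rw [← multiset_matAbs_conjTranspose_eq X] at h1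
  obtain ⟨i, _, hi⟩ := Multiset.mem_map.1 h1
  exact hi ▸ eig_matAbs_mem X hspec i

lemma key_trace_ineq (ha : 0 ≤ a) (φ₁ φ₂ : ℝ → ℝ)
    (hm1 : MonotoneOn φ₁ (Set.Icc a b)) (hm2 : MonotoneOn φ₂ (Set.Icc a b))
    (X : Matrix n n ℂ) (hspec : spectrum ℝ (matAbs X) ⊆ Set.Icc a b) (k : ℕ) :
    (Matrix.trace ((hermCalc (matAbs X) φ₁ - hermCalc (matAbs Xᴴ) φ₂) *
      ((X * Xᴴ) ^ k - (Xᴴ * X) ^ k))).re ≤ 0 := by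
  classical
  set A := matAbs X with hAdef
  set B := matAbs Xᴴ with hBdef
  have hA : A.IsHermitian := matAbs_isHermitian X
  have hB : B.IsHermitian := matAbs_isHermitian Xᴴ
  set lam := hA.eigenvalues with hlamdef
  set mu := hB.eigenvalues with hmudef
  set g : ℝ → ℝ := fun x => x ^ (2 * k) with hgdef
  have hgmono : MonotoneOn g (Set.Icc a b) := fun x hx y _ hxy =>
    pow_le_pow_left₀ (le_trans ha hx.1) hxy _
  have hXk : (Xᴴ * X) ^ k = hermCalc A g := by
    rw [← matAbs_pow_two_mul X k, ← hermCalc_pow hA, hgdef]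
  have hXk' : (X * Xᴴ) ^ k = hermCalc B g := by
    have h1 : (X * Xᴴ) ^ k = ((Xᴴ)ᴴ * Xᴴ) ^ k := by rw [conjTranspose_conjTranspose]
    rw [h1, ← matAbs_pow_two_mul Xᴴ k, ← hermCalc_pow hB, hgdef]
  have hmult : Finset.univ.val.map lam = Finset.univ.val.map mu :=
    multiset_matAbs_conjTranspose_eq X
  have hlam : ∀ i, lam i ∈ Set.Icc a b := eig_matAbs_mem X hspec
  have hmu : ∀ i, mu i ∈ Set.Icc a b := eig_matAbs_conjT_mem X hspec
  -- the four traces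
  have e11 := trace_hermCalc_mul_hermCalc hA hB φ₁ g
  have e22 := trace_hermCalc_mul_hermCalc hB hA φ₂ g
  have e12 : Matrix.trace (hermCalc A φ₁ * hermCalc A g) =
      ((∑ i, φ₁ (lam i) * g (lam i) : ℝ) : ℂ) := by
    rw [hermCalc_mul_hermCalc hA, trace_hermCalc hA]
  have e21 : Matrix.trace (hermCalc B φ₂ * hermCalc B g) =
      ((∑ i, φ₂ (mu i) * g (mu i) : ℝ) : ℂ) := by
    rw [hermCalc_mul_hermCalc hB, trace_hermCalc hB]
  have expand : Matrix.trace ((hermCalc A φ₁ - hermCalc B φ₂) *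
      ((X * Xᴴ) ^ k - (Xᴴ * X) ^ k)) =
      Matrix.trace (hermCalc A φ₁ * hermCalc B g) - Matrix.trace (hermCalc A φ₁ * hermCalc A g)
      - Matrix.trace (hermCalc B φ₂ * hermCalc B g)
      + Matrix.trace (hermCalc B φ₂ * hermCalc A g) := by
    rw [hXk, hXk', sub_mul, mul_sub, mul_sub]
    rw [Matrix.trace_sub, Matrix.trace_sub, Matrix.trace_sub]
    ring
  rw [expand, e11, e22, e12, e21]
  have ineq1 : ∑ i, ∑ j, Complex.normSq
        ((star (Matrix.IsHermitian.eigenvectorUnitary hA : Matrix n n ℂ) *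
          (Matrix.IsHermitian.eigenvectorUnitary hB : Matrix n n ℂ)) i j) *
        (φ₁ (lam i) * g (mu j)) ≤ ∑ i, φ₁ (lam i) * g (lam i) :=
    rearrangement_bound φ₁ g hm1 hgmono lam mu hmult hlam _
      (overlap_mem_doublyStochastic hA hB)
  have ineq2 : ∑ i, ∑ j, Complex.normSq
        ((star (Matrix.IsHermitian.eigenvectorUnitary hB : Matrix n n ℂ) *
          (Matrix.IsHermitian.eigenvectorUnitary hA : Matrix n n ℂ)) i j) *
        (φ₂ (mu i) * g (lam j)) ≤ ∑ i, φ₂ (mu i) * g (mu i) :=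
    rearrangement_bound φ₂ g hm2 hgmono mu lam hmult.symm hmu _
      (overlap_mem_doublyStochastic hB hA)
  have hre : (((∑ i, ∑ j, Complex.normSq
        ((star (Matrix.IsHermitian.eigenvectorUnitary hA : Matrix n n ℂ) *
          (Matrix.IsHermitian.eigenvectorUnitary hB : Matrix n n ℂ)) i j) *
        (φ₁ (lam i) * g (mu j)) : ℝ) : ℂ) - ((∑ i, φ₁ (lam i) * g (lam i) : ℝ) : ℂ)
      - ((∑ i, φ₂ (mu i) * g (mu i) : ℝ) : ℂ)
      + ((∑ i, ∑ j, Complex.normSq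
        ((star (Matrix.IsHermitian.eigenvectorUnitary hB : Matrix n n ℂ) *
          (Matrix.IsHermitian.eigenvectorUnitary hA : Matrix n n ℂ)) i j) *
        (φ₂ (mu i) * g (lam j)) : ℝ) : ℂ)).re
      = (∑ i, ∑ j, Complex.normSq
        ((star (Matrix.IsHermitian.eigenvectorUnitary hA : Matrix n n ℂ) *
          (Matrix.IsHermitian.eigenvectorUnitary hB : Matrix n n ℂ)) i j) *
        (φ₁ (lam i) * g (mu j))) - (∑ i, φ₁ (lam i) * g (lam i))
      - (∑ i, φ₂ (mu i) * g (mu i))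
      + (∑ i, ∑ j, Complex.normSq
        ((star (Matrix.IsHermitian.eigenvectorUnitary hB : Matrix n n ℂ) *
          (Matrix.IsHermitian.eigenvectorUnitary hA : Matrix n n ℂ)) i j) *
        (φ₂ (mu i) * g (lam j))) := by
    push_cast
    simp
  rw [hre]
  linarith [ineq1, ineq2]

end keyineq

section derivs
variable {n : Type*} [Fintype n] [DecidableEq n] {s : Set ℝ} {t : ℝ}

lemma hasDeriv_matrix_mul {A B : ℝ → Matrix n n ℂ} {A' B' : Matrix n n ℂ}
    (hA : ∀ i j, HasDerivWithinAt (fun u => A u i j) (A' i j) s t)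
    (hB : ∀ i j, HasDerivWithinAt (fun u => B u i j) (B' i j) s t) :
    ∀ i j, HasDerivWithinAt (fun u => (A u * B u) i j) ((A' * B t + A t * B') i j) s t := by
  intro i j
  have h1 : (fun u => (A u * B u) i j) = fun u => ∑ k, A u i k * B u k j :=
    funext fun u => Matrix.mul_apply
  have h3 : (A' * B t + A t * B') i j = ∑ k, (A' i k * B t k j + A t i k * B' k j) := by
    simp [Matrix.add_apply, Matrix.mul_apply, Finset.sum_add_distrib]
  rw [h1, h3]
  exact HasDerivWithinAt.fun_sum (fun k _ => (hA i k).mul (hB k j))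

lemma sumder (M M' : Matrix n n ℂ) (k : ℕ) :
    (∑ l ∈ Finset.range k, M ^ l * M' * M ^ (k - 1 - l)) * M + M ^ k * M' =
      ∑ l ∈ Finset.range (k + 1), M ^ l * M' * M ^ (k - l) := by
  rw [Finset.sum_range_succ, Finset.sum_mul]
  congr 1
  · refine Finset.sum_congr rfl fun l hl => ?_
    have hlk : k - 1 - l + 1 = k - l := by
      have := Finset.mem_range.1 hl; omega
    rw [mul_assoc, ← pow_succ, hlk]
  · rw [Nat.sub_self, pow_zero, mul_one]

lemma hasDeriv_matrix_pow {A : ℝ → Matrix n n ℂ} {A' : Matrix n n ℂ}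
    (hA : ∀ i j, HasDerivWithinAt (fun u => A u i j) (A' i j) s t) (k : ℕ) :
    ∀ i j, HasDerivWithinAt (fun u => ((A u) ^ k) i j)
      ((∑ l ∈ Finset.range k, (A t) ^ l * A' * (A t) ^ (k - 1 - l)) i j) s t := by
  induction k with
  | zero =>
      intro i j
      simp only [pow_zero, Finset.range_zero, Finset.sum_empty, Matrix.zero_apply]
      exact hasDerivWithinAt_const _ _ _
  | succ k ih =>
      intro i j
      have h1 : (fun u => ((A u) ^ (k+1)) i j) = fun u => ((A u) ^ k * A u) i j :=
        funext fun u => by rw [pow_succ]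
      rw [h1]
      have h2 := hasDeriv_matrix_mul (A := fun u => (A u) ^ k) (B := A) ih hA i j
      have h3 : (∑ l ∈ Finset.range k, (A t) ^ l * A' * (A t) ^ (k - 1 - l)) * A t
          + (A t) ^ k * A' = ∑ l ∈ Finset.range (k+1), (A t) ^ l * A' * (A t) ^ (k + 1 - 1 - l) :=
        sumder (A t) A' k
      rw [← h3]
      exact h2

lemma mul_pow_comm' (X : Matrix n n ℂ) (j : ℕ) : X * (Xᴴ * X) ^ j = (X * Xᴴ) ^ j * X := by
  induction j with
  | zero => simp
  | succ j ih =>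
      calc X * (Xᴴ * X) ^ (j+1) = X * ((Xᴴ * X) ^ j * (Xᴴ * X)) := by rw [pow_succ]
        _ = (X * (Xᴴ * X) ^ j) * (Xᴴ * X) := by rw [mul_assoc]
        _ = ((X * Xᴴ) ^ j * X) * (Xᴴ * X) := by rw [ih]
        _ = (X * Xᴴ) ^ j * (X * Xᴴ) * X := by simp only [mul_assoc]
        _ = (X * Xᴴ) ^ (j+1) * X := by rw [← pow_succ]

lemma deriv_trace_value (X φ : Matrix n n ℂ) (hφ : φ.IsHermitian) {m : ℕ} (hm : 0 < m) :
    Matrix.trace ((Xᴴ * X) ^ (m-1) *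
        ((φ * X - X * φ)ᴴ * X + Xᴴ * (φ * X - X * φ))) =
      2 * Matrix.trace (φ * ((X * Xᴴ) ^ m - (Xᴴ * X) ^ m)) := by
  have hY : (φ * X - X * φ)ᴴ = Xᴴ * φ - φ * Xᴴ := by
    rw [conjTranspose_sub, conjTranspose_mul, conjTranspose_mul, hφ.eq]
  have hPm : (Xᴴ * X) * (Xᴴ * X) ^ (m-1) = (Xᴴ * X) ^ m := by
    rw [← pow_succ']
    congr 1
    omega
  have hQm : X * ((Xᴴ * X) ^ (m-1) * Xᴴ) = (X * Xᴴ) ^ m := by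
    rw [← mul_assoc, mul_pow_comm', mul_assoc, ← pow_succ]
    congr 1
    omega
  have hA1 : ∀ Z : Matrix n n ℂ, Z = (Xᴴ * X) ^ (m-1) * (Xᴴ * (φ * X)) →
      Matrix.trace Z = Matrix.trace (φ * (X * Xᴴ) ^ m) := by
    rintro Z rfl
    have e1 : (Xᴴ * X) ^ (m-1) * (Xᴴ * (φ * X)) = ((Xᴴ * X) ^ (m-1) * Xᴴ) * (φ * X) := by
      simp only [mul_assoc]
    rw [e1, Matrix.trace_mul_comm]
    have e2 : φ * X * ((Xᴴ * X) ^ (m-1) * Xᴴ) = φ * (X * ((Xᴴ * X) ^ (m-1) * Xᴴ)) := by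
      simp only [mul_assoc]
    rw [e2, hQm]
  have hB1 : Matrix.trace ((Xᴴ * X) ^ (m-1) * (φ * Xᴴ * X)) =
      Matrix.trace (φ * (Xᴴ * X) ^ m) := by
    have e1 : (Xᴴ * X) ^ (m-1) * (φ * Xᴴ * X) = ((Xᴴ * X) ^ (m-1) * φ) * (Xᴴ * X) := by
      simp only [mul_assoc]
    rw [e1, Matrix.trace_mul_comm]
    have e2 : (Xᴴ * X) * ((Xᴴ * X) ^ (m-1) * φ) = ((Xᴴ * X) * (Xᴴ * X) ^ (m-1)) * φ := by
      simp only [mul_assoc]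
    rw [e2, hPm, Matrix.trace_mul_comm]
  have hC1 : Matrix.trace ((Xᴴ * X) ^ (m-1) * (Xᴴ * X * φ)) =
      Matrix.trace (φ * (Xᴴ * X) ^ m) := by
    have e1 : (Xᴴ * X) ^ (m-1) * (Xᴴ * X * φ) = ((Xᴴ * X) ^ (m-1) * (Xᴴ * X)) * φ := by
      simp only [mul_assoc]
    have e3 : (Xᴴ * X) ^ (m-1) * (Xᴴ * X) = (Xᴴ * X) ^ m := by
      rw [← pow_succ]
      congr 1
      omega
    rw [e1, e3, Matrix.trace_mul_comm]
  have expand : (Xᴴ * X) ^ (m-1) * ((φ * X - X * φ)ᴴ * X + Xᴴ * (φ * X - X * φ)) =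
      ((Xᴴ * X) ^ (m-1) * (Xᴴ * (φ * X)) - (Xᴴ * X) ^ (m-1) * (φ * Xᴴ * X))
      + ((Xᴴ * X) ^ (m-1) * (Xᴴ * (φ * X)) - (Xᴴ * X) ^ (m-1) * (Xᴴ * X * φ)) := by
    rw [hY]
    rw [sub_mul, mul_sub, mul_add, mul_sub, mul_sub]
    simp only [mul_assoc]
  rw [expand, Matrix.trace_add, Matrix.trace_sub, Matrix.trace_sub,
    hA1 _ rfl, hB1, hC1, mul_sub, Matrix.trace_sub]
  ring

end derivs

noncomputable def phiMat {m : Type*} [Fintype m] [DecidableEq m]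
    (φ₁ φ₂ : ℝ → ℝ) (A : Matrix m m ℂ) : Matrix m m ℂ :=
  hermCalc (matAbs A) φ₁ - hermCalc (matAbs Aᴴ) φ₂

/-- Along a solution of `X' = [φ(X), X]` staying in `M_n[a,b]`, each Schatten
`2m`-norm `(Tr((X*X)^m))^{1/(2m)}` is decreasing on `[0,τ]`. -/
theorem stmt_5 {n : Type*} [Fintype n] [DecidableEq n] (a b τ : ℝ)
    (ha : 0 ≤ a) (hab : a ≤ b) (hτ : 0 ≤ τ) (φ₁ φ₂ : ℝ → ℝ)
    (hc1 : ContinuousOn φ₁ (Set.Icc a b)) (hc2 : ContinuousOn φ₂ (Set.Icc a b))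
    (hm1 : MonotoneOn φ₁ (Set.Icc a b)) (hm2 : MonotoneOn φ₂ (Set.Icc a b))
    (hs : StrictMonoOn (φ₁ + φ₂) (Set.Icc a b))
    (X : ℝ → Matrix n n ℂ)
    (hspec : ∀ t ∈ Set.Icc 0 τ, spectrum ℝ (matAbs (X t)) ⊆ Set.Icc a b)
    (hode : ∀ t ∈ Set.Icc 0 τ, ∀ i j, HasDerivWithinAt (fun s => X s i j)
      ((phiMat φ₁ φ₂ (X t) * X t - X t * phiMat φ₁ φ₂ (X t)) i j) (Set.Icc 0 τ) t) :
    ∀ m : ℕ, 0 < m →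
      AntitoneOn (fun t => (Matrix.trace (((X t)ᴴ * X t) ^ m)).re ^ ((2 * (m : ℝ))⁻¹))
        (Set.Icc 0 τ) := by
  intro m hm
  set F : ℝ → ℝ := fun t => (Matrix.trace (((X t)ᴴ * X t) ^ m)).re with hFdef
  have hF0 : ∀ t ∈ Set.Icc 0 τ, 0 ≤ F t := by
    intro t ht
    have h1 : F t = ∑ i, ((matAbs_isHermitian (X t)).eigenvalues i) ^ (2*m) := by
      rw [hFdef]
      simp only
      rw [← matAbs_pow_two_mul (X t) m, ← hermCalc_pow (matAbs_isHermitian (X t)),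
        trace_hermCalc, Complex.ofReal_re]
    rw [h1]
    refine Finset.sum_nonneg fun i _ => ?_
    have hmem := eig_matAbs_mem (X t) (hspec t ht) i
    exact pow_nonneg (le_trans ha hmem.1) _
  have hder : ∀ t ∈ Set.Icc 0 τ, HasDerivWithinAt F
      ((m : ℝ) * (2 * (Matrix.trace ((hermCalc (matAbs (X t)) φ₁ -
          hermCalc (matAbs (X t)ᴴ) φ₂) *
        ((X t * (X t)ᴴ) ^ m - ((X t)ᴴ * X t) ^ m))).re)) (Set.Icc 0 τ) t := by
    intro t ht
    set φ := phiMat φ₁ φ₂ (X t) with hphidef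
    have hφ : φ.IsHermitian := IsHermitian.sub (isHermitian_hermCalc _ _) (isHermitian_hermCalc _ _)
    set Y := φ * X t - X t * φ with hYdef
    have hX : ∀ i j, HasDerivWithinAt (fun u => X u i j) (Y i j) (Set.Icc 0 τ) t :=
      fun i j => hode t ht i j
    have hXH : ∀ i j, HasDerivWithinAt (fun u => (X u)ᴴ i j) (Yᴴ i j) (Set.Icc 0 τ) t := by
      intro i j
      have h2 := (hX j i).star
      simpa [Matrix.conjTranspose_apply] using h2
    have hP := hasDeriv_matrix_mul hXH hX
    have hPm := hasDeriv_matrix_pow hP m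
    set P't := Yᴴ * X t + (X t)ᴴ * Y with hPtdef
    set D := ∑ l ∈ Finset.range m, ((X t)ᴴ * X t) ^ l * P't * ((X t)ᴴ * X t) ^ (m-1-l) with hDdef
    have htr : HasDerivWithinAt (fun u => Matrix.trace (((X u)ᴴ * X u) ^ m))
        (Matrix.trace D) (Set.Icc 0 τ) t := by
      have h1 : (fun u => Matrix.trace (((X u)ᴴ * X u) ^ m)) =
          fun u => ∑ i, (((X u)ᴴ * X u) ^ m) i i := funext fun u => rfl
      have h2 : Matrix.trace D = ∑ i, D i i := rfl
      rw [h1, h2]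
      exact HasDerivWithinAt.fun_sum fun i _ => hPm i i
    have hFd := (Complex.reCLM.hasFDerivAt).comp_hasDerivWithinAt t htr
    have hval : Matrix.trace D =
        (m : ℂ) * (2 * Matrix.trace (φ * ((X t * (X t)ᴴ) ^ m - ((X t)ᴴ * X t) ^ m))) := by
      have h1 : Matrix.trace D = ∑ l ∈ Finset.range m,
          Matrix.trace (((X t)ᴴ * X t) ^ l * P't * ((X t)ᴴ * X t) ^ (m-1-l)) :=
        Matrix.trace_sum _ _
      have h2 : ∀ l ∈ Finset.range m,
          Matrix.trace (((X t)ᴴ * X t) ^ l * P't * ((X t)ᴴ * X t) ^ (m-1-l)) =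
          Matrix.trace (((X t)ᴴ * X t) ^ (m-1) * P't) := by
        intro l hl
        rw [Matrix.trace_mul_cycle, ← pow_add]
        have h4 : m - 1 - l + l = m - 1 := by
          have := Finset.mem_range.1 hl
          omega
        rw [h4]
      rw [h1, Finset.sum_congr rfl h2, Finset.sum_const, Finset.card_range, nsmul_eq_mul]
      congr 1
      exact deriv_trace_value (X t) φ hφ hm
    have hre : (Matrix.trace D).re = (m : ℝ) * (2 * (Matrix.trace ((hermCalc (matAbs (X t)) φ₁ -
          hermCalc (matAbs (X t)ᴴ) φ₂) *
        ((X t * (X t)ᴴ) ^ m - ((X t)ᴴ * X t) ^ m))).re) := by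
      rw [hval, hphidef]
      simp [phiMat, Complex.mul_re]
    rw [← hre]
    exact hFd
  have hneg : ∀ t ∈ Set.Icc 0 τ,
      (m : ℝ) * (2 * (Matrix.trace ((hermCalc (matAbs (X t)) φ₁ -
          hermCalc (matAbs (X t)ᴴ) φ₂) *
        ((X t * (X t)ᴴ) ^ m - ((X t)ᴴ * X t) ^ m))).re) ≤ 0 := by
    intro t ht
    have hk := key_trace_ineq ha φ₁ φ₂ hm1 hm2 (X t) (hspec t ht) m
    have h2 : (2 : ℝ) * (Matrix.trace ((hermCalc (matAbs (X t)) φ₁ -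
          hermCalc (matAbs (X t)ᴴ) φ₂) *
        ((X t * (X t)ᴴ) ^ m - ((X t)ᴴ * X t) ^ m))).re ≤ 0 := by linarith
    exact mul_nonpos_iff.2 (Or.inl ⟨Nat.cast_nonneg m, h2⟩)
  have hantiF : AntitoneOn F (Set.Icc 0 τ) := by
    apply antitoneOn_of_deriv_nonpos (convex_Icc 0 τ)
    · exact fun t ht => (hder t ht).continuousWithinAt
    · intro x hx
      rw [interior_Icc] at hx
      exact (((hder x (Ioo_subset_Icc_self hx)).hasDerivAt
        (Icc_mem_nhds hx.1 hx.2)).differentiableAt).differentiableWithinAt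
    · intro x hx
      rw [interior_Icc] at hx
      have h := (hder x (Ioo_subset_Icc_self hx)).hasDerivAt (Icc_mem_nhds hx.1 hx.2)
      rw [h.deriv]
      exact hneg x (Ioo_subset_Icc_self hx)
  intro x hx y hy hxy
  exact Real.rpow_le_rpow (hF0 y hy) (hantiF hx hy hxy) (by positivity)
end
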